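/- Let \(J : \mathbb{R}^d \to \mathbb{R}\) be differentiable with L-Lipschitz gradient, and let \(J_\mu(\theta) = \mathbb{E}_{u \sim \mathrm{Unif}(\mathbb{B}^d)}[J(\theta + \mu u)]\). Then for all \(\theta\), \(\|\nabla J_\mu(\theta) - \nabla J(\theta)\| \le \frac{\mu d L}{2}\). -/

import Mathlib

open MeasureTheory Metric

/-- Uniform probability measure on the closed unit ball of `ℝ^d`. -/
noncomputable def unifBall (d : ℕ) : Measure (EuclideanSpace ℝ (Fin d)) :=
  (volume (closedBall (0 : EuclideanSpace ℝ (Fin d)) 1))⁻¹ •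
    volume.restrict (closedBall (0 : EuclideanSpace ℝ (Fin d)) 1)

section Aux

variable {d : ℕ}

lemma unifBall_isProb (hd : 0 < d) : IsProbabilityMeasure (unifBall d) := by
  constructor
  rw [unifBall, Measure.smul_apply, Measure.restrict_apply_univ, smul_eq_mul]
  exact ENNReal.inv_mul_cancel (measure_closedBall_pos _ _ one_pos).ne'
    measure_closedBall_lt_top.ne

lemma unifBall_integrable {B : Type} [NormedAddCommGroup B]
    (g : EuclideanSpace ℝ (Fin d) → B) (hg : Continuous g) :
    Integrable g (unifBall d) := by
  rw [unifBall]
  exact (hg.continuousOn.integrableOn_compact (isCompact_closedBall _ _)).smul_measure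
    (ENNReal.inv_ne_top.mpr (measure_closedBall_pos _ _ one_pos).ne')

lemma unifBall_ae_mem :
    ∀ᵐ u ∂(unifBall d), u ∈ closedBall (0 : EuclideanSpace ℝ (Fin d)) 1 := by
  rw [unifBall]
  exact Measure.ae_smul_measure (ae_restrict_mem measurableSet_closedBall) _

lemma unifBall_norm_integral (hd : 0 < d) :
    ∫ u, ‖u‖ ∂(unifBall d) = d / (d + 1) := by
  haveI : Nonempty (Fin d) := ⟨⟨0, hd⟩⟩
  haveI : Nontrivial (EuclideanSpace ℝ (Fin d)) :=
    Module.nontrivial_of_finrank_pos (R := ℝ)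
      (by rw [finrank_euclideanSpace_fin]; exact hd)
  set E := EuclideanSpace ℝ (Fin d)
  set K := closedBall (0 : E) 1 with hK
  have h1 : ∫ u in K, ‖u‖ ∂volume
      = ∫ u : E, Set.indicator (Set.Icc (0:ℝ) 1) id ‖u‖ ∂volume := by
    rw [← integral_indicator measurableSet_closedBall]
    congr 1; funext u
    by_cases h : u ∈ K
    · rw [Set.indicator_of_mem h, Set.indicator_of_mem
        (Set.mem_Icc.mpr ⟨norm_nonneg u, mem_closedBall_zero_iff.mp h⟩)]
      rfl
    · rw [Set.indicator_of_notMem h, Set.indicator_of_notMem]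
      intro hc
      exact h (mem_closedBall_zero_iff.mpr hc.2)
  have h2 : ∫ y in Set.Ioi (0:ℝ), y ^ (Module.finrank ℝ E - 1) •
      Set.indicator (Set.Icc (0:ℝ) 1) id y = 1 / (d + 1) := by
    have hfr : Module.finrank ℝ E = d := finrank_euclideanSpace_fin
    have heq : ∀ y ∈ Set.Ioi (0:ℝ), y ^ (Module.finrank ℝ E - 1) •
        Set.indicator (Set.Icc (0:ℝ) 1) id y
        = Set.indicator (Set.Ioc (0:ℝ) 1) (fun y => y ^ d) y := by
      intro y hy
      by_cases h : y ≤ 1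
      · rw [Set.indicator_of_mem (Set.mem_Icc.mpr ⟨le_of_lt hy, h⟩), Set.indicator_of_mem (Set.mem_Ioc.mpr ⟨hy, h⟩)]
        simp only [id, smul_eq_mul, hfr]
        rw [← pow_succ, Nat.sub_add_cancel hd]
      · rw [Set.indicator_of_notMem (by simp [h]), Set.indicator_of_notMem (by simp [h])]
        simp
    rw [setIntegral_congr_fun measurableSet_Ioi heq, integral_indicator measurableSet_Ioc,
      Measure.restrict_restrict measurableSet_Ioc,
      Set.inter_eq_left.mpr Set.Ioc_subset_Ioi_self,
      ← intervalIntegral.integral_of_le zero_le_one, integral_pow]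
    push_cast
    ring
  have h3 : ∫ u : E, Set.indicator (Set.Icc (0:ℝ) 1) id ‖u‖ ∂volume
      = Module.finrank ℝ E • (volume (ball (0:E) 1)).toReal • (1 / ((d:ℝ) + 1)) := by
    rw [integral_fun_norm_addHaar volume (Set.indicator (Set.Icc (0:ℝ) 1) id), h2]
    rfl
  have hKb : volume K = volume (ball (0:E) 1) :=
    Measure.addHaar_closedBall_eq_addHaar_ball volume (0:E) 1
  have hV : 0 < (volume (ball (0:E) 1)).toReal :=
    ENNReal.toReal_pos (measure_ball_pos _ _ one_pos).ne' measure_ball_lt_top.ne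
  rw [unifBall, integral_smul_measure, ← hK, h1, h3, hKb]
  rw [ENNReal.toReal_inv, finrank_euclideanSpace_fin]
  simp only [smul_eq_mul, nsmul_eq_mul]
  field_simp

end Aux

theorem smoothed_gradient_bias {d : ℕ} (hd : 0 < d)
    (J : EuclideanSpace ℝ (Fin d) → ℝ) (hJ : Differentiable ℝ J)
    (L : ℝ) (hL : 0 < L)
    (hlip : ∀ x y, ‖gradient J x - gradient J y‖ ≤ L * ‖x - y‖)
    (μ : ℝ) (hμ : 0 < μ) (θ : EuclideanSpace ℝ (Fin d)) :
    ‖gradient (fun x => ∫ u, J (x + μ • u) ∂(unifBall d)) θ - gradient J θ‖ ≤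
      μ * d * L / 2 := by
  haveI := unifBall_isProb hd
  set ν := unifBall d with hν
  -- fderiv in terms of gradient
  have hfd : ∀ x : (EuclideanSpace ℝ (Fin d)), fderiv ℝ J x = InnerProductSpace.toDual ℝ (EuclideanSpace ℝ (Fin d)) (gradient J x) := fun x =>
    ((InnerProductSpace.toDual ℝ (EuclideanSpace ℝ (Fin d))).apply_symm_apply (fderiv ℝ J x)).symm
  have hlipf : ∀ x y : (EuclideanSpace ℝ (Fin d)), ‖fderiv ℝ J x - fderiv ℝ J y‖ ≤ L * ‖x - y‖ := by
    intro x y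
    rw [hfd x, hfd y, ← map_sub, LinearIsometryEquiv.norm_map]
    exact hlip x y
  have hgc : Continuous (gradient J) := by
    have hlw : LipschitzWith (Real.toNNReal L) (gradient J) := by
      apply LipschitzWith.of_dist_le_mul
      intro x y
      rw [dist_eq_norm, dist_eq_norm, Real.coe_toNNReal _ hL.le]
      exact hlip x y
    exact hlw.continuous
  have hfc : Continuous (fun x : (EuclideanSpace ℝ (Fin d)) => fderiv ℝ J x) := by
    have h := (InnerProductSpace.toDual ℝ (EuclideanSpace ℝ (Fin d))).continuous.comp hgc
    have he : (fun x : (EuclideanSpace ℝ (Fin d)) => fderiv ℝ J x) = ⇑(InnerProductSpace.toDual ℝ (EuclideanSpace ℝ (Fin d))) ∘ gradient J := funext hfd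
    rw [he]; exact h
  -- derivative of inner function
  have hdiff : ∀ (u x : (EuclideanSpace ℝ (Fin d))), HasFDerivAt (fun x => J (x + μ • u)) (fderiv ℝ J (x + μ • u)) x := by
    intro u x
    have h1 : HasFDerivAt (fun x : (EuclideanSpace ℝ (Fin d)) => x + μ • u) (ContinuousLinearMap.id ℝ (EuclideanSpace ℝ (Fin d))) x :=
      (hasFDerivAt_id x).add_const _
    have h2 := (hJ (x + μ • u)).hasFDerivAt.comp x h1
    exact h2
  -- differentiation under the integral sign
  have key : HasFDerivAt (fun x => ∫ u, J (x + μ • u) ∂ν)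
      (∫ u, fderiv ℝ J (θ + μ • u) ∂ν) θ := by
    have hcont : ∀ x : (EuclideanSpace ℝ (Fin d)), Continuous fun u : (EuclideanSpace ℝ (Fin d)) => x + μ • u :=
      fun x => continuous_const.add (continuous_id.const_smul μ)
    apply hasFDerivAt_integral_of_dominated_of_fderiv_le
      (F' := fun x u => fderiv ℝ J (x + μ • u))
      (bound := fun _ => ‖fderiv ℝ J θ‖ + L * (1 + μ)) (ball_mem_nhds θ one_pos)
    · exact Filter.Eventually.of_forall fun x =>
        (hJ.continuous.comp (hcont x)).aestronglyMeasurable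
    · exact unifBall_integrable _ (hJ.continuous.comp (hcont θ))
    · exact (hfc.comp (hcont θ)).aestronglyMeasurable
    · filter_upwards [unifBall_ae_mem (d := d)] with u hu x hx
      have h1 : ‖fderiv ℝ J (x + μ • u) - fderiv ℝ J θ‖ ≤ L * ‖x + μ • u - θ‖ := hlipf _ _
      have h2 : ‖x + μ • u - θ‖ ≤ 1 + μ := by
        have he : x + μ • u - θ = (x - θ) + μ • u := by abel
        rw [he]
        have hx1 : ‖x - θ‖ ≤ 1 := (mem_ball_iff_norm.mp hx).le
        have hu1 : ‖μ • u‖ ≤ μ := by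
          rw [norm_smul, Real.norm_eq_abs, abs_of_pos hμ]
          have := mem_closedBall_zero_iff.mp hu
          nlinarith
        exact (norm_add_le _ _).trans (by linarith)
      have h3 : ‖fderiv ℝ J (x + μ • u)‖ ≤
          ‖fderiv ℝ J θ‖ + ‖fderiv ℝ J (x + μ • u) - fderiv ℝ J θ‖ := by
        have := norm_add_le (fderiv ℝ J θ) (fderiv ℝ J (x + μ • u) - fderiv ℝ J θ)
        simpa using this
      have h4 : L * ‖x + μ • u - θ‖ ≤ L * (1 + μ) :=
        mul_le_mul_of_nonneg_left h2 hL.le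
      linarith
    · exact integrable_const _
    · exact Filter.Eventually.of_forall fun u x _ => hdiff u x
  -- rewrite the gradient difference
  have hFg : gradient (fun x => ∫ u, J (x + μ • u) ∂ν) θ =
      (InnerProductSpace.toDual ℝ (EuclideanSpace ℝ (Fin d))).symm (∫ u, fderiv ℝ J (θ + μ • u) ∂ν) :=
    congrArg _ key.fderiv
  have hint1 : Integrable (fun u : (EuclideanSpace ℝ (Fin d)) => fderiv ℝ J (θ + μ • u)) ν :=
    unifBall_integrable _ (hfc.comp (continuous_const.add (continuous_id.const_smul μ)))
  have heq : gradient (fun x => ∫ u, J (x + μ • u) ∂ν) θ - gradient J θ =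
      (InnerProductSpace.toDual ℝ (EuclideanSpace ℝ (Fin d))).symm
        (∫ u, (fderiv ℝ J (θ + μ • u) - fderiv ℝ J θ) ∂ν) := by
    rw [hFg, show gradient J θ = (InnerProductSpace.toDual ℝ (EuclideanSpace ℝ (Fin d))).symm (fderiv ℝ J θ) from rfl,
      ← map_sub]
    congr 1
    rw [integral_sub hint1 (integrable_const _), integral_const]
    simp
  rw [heq, LinearIsometryEquiv.norm_map]
  have hintn : Integrable (fun u : (EuclideanSpace ℝ (Fin d)) => L * μ * ‖u‖) ν :=
    unifBall_integrable _ (continuous_const.mul continuous_norm)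
  have hb : ‖∫ u, (fderiv ℝ J (θ + μ • u) - fderiv ℝ J θ) ∂ν‖ ≤ ∫ u, L * μ * ‖u‖ ∂ν := by
    apply norm_integral_le_of_norm_le hintn
    filter_upwards with u
    calc ‖fderiv ℝ J (θ + μ • u) - fderiv ℝ J θ‖ ≤ L * ‖θ + μ • u - θ‖ := hlipf _ _
      _ = L * μ * ‖u‖ := by
          rw [add_sub_cancel_left, norm_smul, Real.norm_eq_abs, abs_of_pos hμ, mul_assoc]
  have hnorm : ∫ u, L * μ * ‖u‖ ∂ν = L * μ * (d / (d + 1)) := by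
    rw [integral_const_mul, unifBall_norm_integral hd]
  have hfrac : (d : ℝ) / (d + 1) ≤ d / 2 := by
    have h1 : (1 : ℝ) ≤ d := by exact_mod_cast hd
    apply div_le_div_of_nonneg_left (by positivity) (by norm_num) (by linarith)
  calc ‖∫ u, (fderiv ℝ J (θ + μ • u) - fderiv ℝ J θ) ∂ν‖ ≤ ∫ u, L * μ * ‖u‖ ∂ν := hb
    _ = L * μ * (d / (d + 1)) := hnorm
    _ ≤ L * μ * (d / 2) := mul_le_mul_of_nonneg_left hfrac (by positivity)
    _ = μ * d * L / 2 := by ring
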